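/- Let M, a, s be positive integers with M > 1 such that ∑_{i=0}^{M-1} (a+i)^2 = s^2. If M = 12·m₁ + 11 for a nonnegative integer m₁, then for every integer α ≥ 2 one has m₁ ≢ 3·2^(α-2) − 1 (mod 2^α). -/

import Mathlib

lemma aux_even (x y : ℤ) (h : (4:ℤ) ∣ 3*(x^2+y^2)) : (∃ x', x = 2*x') ∧ (∃ y', y = 2*y') := by
  rcases Int.even_or_odd x with ⟨m, hm⟩ | ⟨m, hm⟩ <;>
    rcases Int.even_or_odd y with ⟨n, hn⟩ | ⟨n, hn⟩ <;> subst hm hn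
  · exact ⟨⟨m, by ring⟩, ⟨n, by ring⟩⟩
  · exfalso
    rw [show 3*((m+m)^2+(2*n+1)^2) = 4*(3*m^2+3*n^2+3*n)+3 from by ring] at h
    obtain ⟨c, hc⟩ := h
    have h4 : (4:ℤ)*(c - (3*m^2+3*n^2+3*n)) = 3 := by linarith
    set K := c - (3*m^2+3*n^2+3*n) with hK
    omega
  · exfalso
    rw [show 3*((2*m+1)^2+(n+n)^2) = 4*(3*n^2+3*m^2+3*m)+3 from by ring] at h
    obtain ⟨c, hc⟩ := h
    have h4 : (4:ℤ)*(c - (3*n^2+3*m^2+3*m)) = 3 := by linarith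
    set K := c - (3*n^2+3*m^2+3*m) with hK
    omega
  · exfalso
    rw [show 3*((2*m+1)^2+(2*n+1)^2) = 4*(3*m^2+3*m+3*n^2+3*n+1)+2 from by ring] at h
    obtain ⟨c, hc⟩ := h
    have h4 : (4:ℤ)*(c - (3*m^2+3*m+3*n^2+3*n+1)) = 2 := by linarith
    set K := c - (3*m^2+3*m+3*n^2+3*n+1) with hK
    omega

lemma aux_desc : ∀ k : ℕ, ∀ x y : ℤ, ¬ (2:ℤ)^(k+2) ∣ 3*(x^2+y^2) - 2^k := by
  intro k
  induction k using Nat.strong_induction_on with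
  | _ k ih =>
    match k with
    | 0 =>
      intro x y h
      have h0 : ((3*(x^2+y^2) - 2^0 : ℤ) : ZMod 4) = 0 := by
        rw [ZMod.intCast_zmod_eq_zero_iff_dvd]
        exact_mod_cast h
      push_cast at h0
      have : ∀ u v : ZMod 4, 3*(u^2+v^2) - 1 ≠ 0 := by decide
      exact this x y (by convert h0 using 2)
    | 1 =>
      intro x y h
      have h0 : ((3*(x^2+y^2) - 2^1 : ℤ) : ZMod 8) = 0 := by
        rw [ZMod.intCast_zmod_eq_zero_iff_dvd]
        exact_mod_cast h
      push_cast at h0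
      have : ∀ u v : ZMod 8, 3*(u^2+v^2) - 2 ≠ 0 := by decide
      exact this x y (by convert h0 using 2)
    | (k+2) =>
      intro x y h
      have h4 : (4:ℤ) ∣ 3*(x^2+y^2) := by
        have h1 : (4:ℤ) ∣ 3*(x^2+y^2) - 2^(k+2) := by
          refine dvd_trans ?_ h
          exact ⟨2^(k+2), by ring⟩
        have h2 : (4:ℤ) ∣ 2^(k+2) := ⟨2^k, by ring⟩
        omega
      obtain ⟨⟨x', rfl⟩, ⟨y', rfl⟩⟩ := aux_even x y h4
      refine ih k (by omega) x' y' ?_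
      have heq : 3*((2*x')^2+(2*y')^2) - 2^(k+2) = 4*(3*(x'^2+y'^2) - 2^k) := by ring
      rw [heq, show ((2:ℤ)^(k+2+2)) = 4 * 2^(k+2) from by ring] at h
      exact (mul_dvd_mul_iff_left (by norm_num : (4:ℤ) ≠ 0)).mp h

lemma aux_sum (a : ℤ) : ∀ n : ℕ,
    6 * ∑ i ∈ Finset.range n, (a + i)^2
      = n * (2*(n:ℤ)^2 + (6*a-3)*(n:ℤ) + (6*a^2-6*a+1)) := by
  intro n
  induction n with
  | zero => simp
  | succ n ih =>
    rw [Finset.sum_range_succ]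
    push_cast
    push_cast at ih
    linear_combination ih

theorem stmt (M a s m₁ : ℕ) (hM : 1 < M) (ha : 1 ≤ a) (hs : 1 ≤ s)
    (hsum : ∑ i ∈ Finset.range M, (a + i) ^ 2 = s ^ 2)
    (hMeq : M = 12 * m₁ + 11) :
    ∀ α : ℕ, 2 ≤ α → ¬ m₁ ≡ 3 * 2 ^ (α - 2) - 1 [MOD 2 ^ α] := by
  intro α hα hcong
  -- integer form of the congruence
  have h1 : (1:ℕ) ≤ 3 * 2 ^ (α - 2) := Nat.one_le_iff_ne_zero.mpr (by positivity)
  have hdvd := hcong.dvd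
  rw [Nat.cast_sub h1] at hdvd
  push_cast at hdvd
  obtain ⟨t, ht⟩ := hdvd
  set A : ℤ := 2 ^ (α - 2) with hA
  have h4A : (2:ℤ) ^ α = 4 * A := by
    have hp : (2:ℤ)^(α-2+2) = 2^(α-2) * 2^2 := pow_add 2 (α-2) 2
    rw [show α - 2 + 2 = α from by omega] at hp
    rw [hA, hp]; ring
  have hm1 : (m₁:ℤ) = 3*A - 1 - 4*A*t := by
    rw [h4A] at ht
    linarith
  -- integer form of the sum equation
  have hZ := congrArg (fun n : ℕ => (n:ℤ)) hsum
  push_cast at hZ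
  have hMP : 6 * (s:ℤ)^2
      = (M:ℤ) * (2*(M:ℤ)^2 + (6*(a:ℤ)-3)*(M:ℤ) + (6*(a:ℤ)^2-6*(a:ℤ)+1)) := by
    rw [← hZ]
    exact aux_sum (a:ℤ) M
  have hMint : (M:ℤ) = 4*A*(9 - 12*t) - 1 := by
    rw [hMeq]
    push_cast
    rw [hm1]
    ring
  rw [hMint] at hMP
  obtain ⟨c, hc⟩ := Int.even_mul_succ_self (a:ℤ)
  -- the key divisibility
  refine aux_desc (α - 1) (s:ℤ) ((a:ℤ) - 1) ?_
  have e1 : (2:ℤ) ^ (α - 1) = 2 * A := by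
    have hp : (2:ℤ)^(α-2+1) = 2^(α-2) * 2^1 := pow_add 2 (α-2) 1
    rw [show α - 2 + 1 = α - 1 from by omega] at hp
    rw [hA, hp]; ring
  have e2 : (2:ℤ) ^ (α - 1 + 2) = 8 * A := by
    have hp : (2:ℤ)^(α-2+3) = 2^(α-2) * 2^3 := pow_add 2 (α-2) 3
    rw [show α - 2 + 3 = α - 1 + 2 from by omega] at hp
    rw [hA, hp]; ring
  rw [e1, e2]
  have key : (2:ℤ) * (8*A) ∣ 2 * (3*((s:ℤ)^2 + ((a:ℤ)-1)^2) - 2*A) := by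
    refine ⟨8*A^2*(9-12*t)^3 + A*(9-12*t)^2*(6*(a:ℤ)-9)
      - 3*t*(6*(a:ℤ)^2-18*(a:ℤ)+13) + (13*(a:ℤ)^2 - 41*(a:ℤ) + 29) + c, ?_⟩
    linear_combination hMP + 8*A*hc
  exact (mul_dvd_mul_iff_left (by norm_num : (2:ℤ) ≠ 0)).mp key
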